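/- Let m be a positive integer and z_1,...,z_m real numbers. Fix x ∈ ℝ and define p(k) = x + Σ_{i=1}^k z_i for k = 0,...,m. Let a = min_k p(k) and b = max_k p(k), and y = p(m). Then max_{k=1,...,m} |Σ_{i=1}^k z_i − Σ_{i=k+1}^m z_i| = max{2b − x − y, x + y − 2a}. -/

import Mathlib

lemma sup'_max_eq {s : Finset ℕ} (H : s.Nonempty) (f g : ℕ → ℝ) :
    s.sup' H (fun k => max (f k) (g k)) = max (s.sup' H f) (s.sup' H g) := by
  apply le_antisymm
  · exact Finset.sup'_le _ _ fun k hk =>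
      max_le_max (Finset.le_sup' f hk) (Finset.le_sup' g hk)
  · exact max_le
      (Finset.sup'_le _ _ fun k hk =>
        (le_max_left (f k) (g k)).trans (Finset.le_sup' (fun k => max (f k) (g k)) hk))
      (Finset.sup'_le _ _ fun k hk =>
        (le_max_right (f k) (g k)).trans (Finset.le_sup' (fun k => max (f k) (g k)) hk))

theorem stmt_1 (m : ℕ) (hm : 1 ≤ m) (z : ℕ → ℝ) (x : ℝ)
    (p : ℕ → ℝ) (hp : ∀ k, p k = x + ∑ i ∈ Finset.range k, z i)
    (a b y : ℝ)
    (ha : a = (Finset.range (m + 1)).inf' Finset.nonempty_range_add_one p)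
    (hb : b = (Finset.range (m + 1)).sup' Finset.nonempty_range_add_one p)
    (hy : y = p m) :
    (Finset.Icc 1 m).sup' (Finset.nonempty_Icc.mpr hm)
        (fun k => |(∑ i ∈ Finset.range k, z i) - ∑ i ∈ Finset.Ico k m, z i|)
      = max (2 * b - x - y) (x + y - 2 * a) := by
  set F : ℕ → ℝ := fun k => max (2 * p k - x - y) (x + y - 2 * p k) with hF
  have key : ∀ k ∈ Finset.Icc 1 m,
      |(∑ i ∈ Finset.range k, z i) - ∑ i ∈ Finset.Ico k m, z i| = F k := by
    intro k hk
    rw [Finset.mem_Icc] at hk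
    have hsum : ∑ i ∈ Finset.range k, z i + ∑ i ∈ Finset.Ico k m, z i
        = ∑ i ∈ Finset.range m, z i := by
      simp only [Finset.range_eq_Ico]
      exact Finset.sum_Ico_consecutive z (Nat.zero_le k) hk.2
    have h1 : ∑ i ∈ Finset.range k, z i = p k - x := by rw [hp k]; ring
    have hm' : ∑ i ∈ Finset.range m, z i = y - x := by rw [hy, hp m]; ring
    have h2 : ∑ i ∈ Finset.Ico k m, z i = y - p k := by linarith
    rw [h1, h2, abs_eq_max_neg, hF]
    ring_nf
  rw [Finset.sup'_congr (Finset.nonempty_Icc.mpr hm) rfl key]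
  have hext : (Finset.Icc 1 m).sup' (Finset.nonempty_Icc.mpr hm) F
      = (Finset.range (m + 1)).sup' Finset.nonempty_range_add_one F := by
    apply le_antisymm
    · apply Finset.sup'_le
      intro k hk
      rw [Finset.mem_Icc] at hk
      exact Finset.le_sup' F (Finset.mem_range.mpr (Nat.lt_succ_of_le hk.2))
    · apply Finset.sup'_le
      intro k hk
      rw [Finset.mem_range, Nat.lt_succ_iff] at hk
      rcases Nat.eq_zero_or_pos k with h0 | h0
      · have hF0 : F 0 = F m := by
          simp only [hF]
          rw [hp 0, hy]
          simp [max_comm]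
          ring_nf
          rw [max_comm]
        rw [h0, hF0]
        exact Finset.le_sup' F (Finset.mem_Icc.mpr ⟨hm, le_refl m⟩)
      · exact Finset.le_sup' F (Finset.mem_Icc.mpr ⟨h0, hk⟩)
  rw [hext, hF, sup'_max_eq]
  have hsup : (Finset.range (m + 1)).sup' Finset.nonempty_range_add_one
      (fun k => 2 * p k - x - y) = 2 * b - x - y := by
    apply le_antisymm
    · apply Finset.sup'_le
      intro k hk
      have : p k ≤ b := hb ▸ Finset.le_sup' p hk
      linarith
    · obtain ⟨i, hi, hib⟩ := Finset.exists_mem_eq_sup' (Finset.nonempty_range_add_one (n := m)) p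
      have : b = p i := hb ▸ hib
      rw [this]
      exact Finset.le_sup' (fun k => 2 * p k - x - y) hi
  have hinf : (Finset.range (m + 1)).sup' Finset.nonempty_range_add_one
      (fun k => x + y - 2 * p k) = x + y - 2 * a := by
    apply le_antisymm
    · apply Finset.sup'_le
      intro k hk
      have : a ≤ p k := ha ▸ Finset.inf'_le p hk
      linarith
    · obtain ⟨i, hi, hia⟩ := Finset.exists_mem_eq_inf' (Finset.nonempty_range_add_one (n := m)) p
      have : a = p i := ha ▸ hia
      rw [this]
      exact Finset.le_sup' (fun k => x + y - 2 * p k) hi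
  rw [hsup, hinf]
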